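/- arXiv:2505.14614 — 4 statements merged into one kernel-verified Lean document; each statement's English description precedes it below -/
import Mathlib

section
/- Fix an integer r ≥ 1 and positive integers t₁, …, t_r. Then the function n ↦ ∑_{d₁,…,d_r ≥ 1, d₁+⋯+d_r ≤ n} d₁^{t₁} ⋯ d_r^{t_r} is given by a polynomial with rational coefficients in n, of degree t₁+⋯+t_r+r and with zero constant term (i.e. divisible by n). -/
open Polynomial Finset

noncomputable def Qp (p : ℕ) : ℚ[X] :=
  ∑ i ∈ Finset.range (p+1), C (_root_.bernoulli i * ((p+1).choose i) / (p+1)) * X^(p+1-i)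

lemma Qp_eval (p n : ℕ) : (Qp p).eval (n : ℚ) = ∑ k ∈ Finset.range n, (k:ℚ)^p := by
  rw [sum_range_pow, Qp, eval_finset_sum]
  exact Finset.sum_congr rfl fun i _ => by simp; ring

lemma Qp_coeff (p : ℕ) : (Qp p).coeff (p+1) = 1/(p+1) := by
  rw [Qp, finset_sum_coeff]
  rw [Finset.sum_eq_single 0]
  · simp
  · intro i hi h0
    simp only [coeff_C_mul, coeff_X_pow]
    rw [if_neg (by simp at hi; omega)]
    ring
  · simp

lemma Qp_natDegree (p : ℕ) : (Qp p).natDegree = p + 1 := by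
  apply le_antisymm
  · apply Polynomial.natDegree_sum_le_of_forall_le
    intro i hi
    apply le_trans (natDegree_C_mul_le _ _)
    simp
  · apply le_natDegree_of_ne_zero
    rw [Qp_coeff]
    positivity

noncomputable def Sp (p : ℕ) : ℚ[X] := (Qp p).comp (X + 1)

lemma hdeg1 : (X + 1 : ℚ[X]).natDegree = 1 := by rw [← C_1]; exact natDegree_X_add_C 1
lemma hlc1 : (X + 1 : ℚ[X]).leadingCoeff = 1 := by rw [← C_1]; exact leadingCoeff_X_add_C 1

lemma Sp_eval (p n : ℕ) : (Sp p).eval (n : ℚ) = ∑ k ∈ Finset.range (n+1), (k:ℚ)^p := by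
  have := Qp_eval p (n+1)
  push_cast at this
  simpa [Sp, eval_comp] using this

lemma Sp_natDegree (p : ℕ) : (Sp p).natDegree = p + 1 := by
  rw [Sp, natDegree_comp, Qp_natDegree, hdeg1, mul_one]

lemma Sp_coeff (p : ℕ) : (Sp p).coeff (p+1) = 1/(p+1) := by
  have h1 : (Sp p).coeff (p+1) = (Sp p).leadingCoeff := by
    rw [leadingCoeff, Sp_natDegree]
  rw [h1, Sp, leadingCoeff_comp (by rw [hdeg1]; omega), hlc1, one_pow, mul_one,
    leadingCoeff, Qp_natDegree, Qp_coeff]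


lemma beta_id : ∀ (k t : ℕ), ∑ j ∈ Finset.range (k+1), (-1:ℚ)^j * (k.choose j) / (t+j+1)
    = (t.factorial * k.factorial : ℚ) / (t+k+1).factorial := by
  intro k
  induction k with
  | zero =>
    intro t
    have h : ((t+0+1).factorial : ℚ) = ((t:ℚ)+1) * t.factorial := by
      rw [show t+0+1 = t+1 from rfl, Nat.factorial_succ]; push_cast; ring
    have hf : (t.factorial : ℚ) ≠ 0 := by exact_mod_cast t.factorial_ne_zero
    have ht1 : ((t:ℚ)+1) ≠ 0 := by positivity
    simp only [zero_add, add_zero, Finset.sum_range_one, Nat.cast_zero, pow_zero, Nat.choose_self, Nat.cast_one,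
      Nat.factorial_zero, h]
    field_simp
  | succ k ih =>
    intro t
    have iht1 := ih (t+1)
    push_cast at iht1
    have key : ∑ j ∈ Finset.range (k+2), (-1:ℚ)^j * ((k+1).choose j) / (t+j+1)
        = (∑ j ∈ Finset.range (k+1), (-1:ℚ)^j * (k.choose j) / (t+j+1))
          - ∑ j ∈ Finset.range (k+1), (-1:ℚ)^j * (k.choose j) / ((t:ℚ)+1+j+1) := by
      rw [Finset.sum_range_succ' (fun j => (-1:ℚ)^j * ((k+1).choose j) / (t+j+1)) (k+1)]
      push_cast
      have expand : ∑ j ∈ Finset.range (k+1), (-1:ℚ)^(j+1) * ((k+1).choose (j+1)) / ((t:ℚ)+(j+1)+1)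
          = (∑ j ∈ Finset.range (k+1), (-1:ℚ)^(j+1) * (k.choose j) / ((t:ℚ)+j+2))
            + ∑ j ∈ Finset.range (k+1), (-1:ℚ)^(j+1) * (k.choose (j+1)) / ((t:ℚ)+j+2) := by
        rw [← Finset.sum_add_distrib]
        apply Finset.sum_congr rfl
        intro j _
        rw [show ((k+1).choose (j+1) : ℚ) = (k.choose j : ℚ) + (k.choose (j+1) : ℚ) by
          rw [Nat.choose_succ_succ]; push_cast; ring]
        ring
      rw [expand]
      have e1 : ∑ j ∈ Finset.range (k+1), (-1:ℚ)^(j+1) * (k.choose j) / ((t:ℚ)+j+2)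
          = - ∑ j ∈ Finset.range (k+1), (-1:ℚ)^j * (k.choose j) / ((t:ℚ)+1+j+1) := by
        rw [← Finset.sum_neg_distrib]
        apply Finset.sum_congr rfl
        intro j _
        ring
      have e2 : (∑ j ∈ Finset.range (k+1), (-1:ℚ)^(j+1) * (k.choose (j+1)) / ((t:ℚ)+j+2))
            + 1/((t:ℚ)+1)
          = ∑ j ∈ Finset.range (k+1), (-1:ℚ)^j * (k.choose j) / ((t:ℚ)+j+1) := by
        rw [Finset.sum_range_succ (fun j => (-1:ℚ)^(j+1) * (k.choose (j+1)) / ((t:ℚ)+j+2)) k]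
        rw [Finset.sum_range_succ' (fun j => (-1:ℚ)^j * (k.choose j) / ((t:ℚ)+j+1)) k]
        push_cast
        simp only [Nat.choose_succ_self, Nat.cast_zero, Nat.cast_ofNat]
        have : ∑ j ∈ Finset.range k, (-1:ℚ)^(j+1) * (k.choose (j+1)) / ((t:ℚ)+j+2)
            = ∑ j ∈ Finset.range k, (-1:ℚ)^(j+1) * (k.choose (j+1)) / ((t:ℚ)+(j+1)+1) := by
          apply Finset.sum_congr rfl; intro j _; ring_nf
        rw [this]
        simp [Nat.choose_succ_self]
      rw [e1]
      have h0 : ((k+1).choose 0 : ℚ) = 1 := by simp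
      simp only [pow_zero, h0, one_mul, add_zero]
      linarith [e2]
    rw [key, ih t, iht1]
    have hA : t+(k+1)+1 = (t+k+1)+1 := by omega
    have hB : t+1+k+1 = (t+k+1)+1 := by omega
    rw [hA, hB, Nat.factorial_succ (t+k+1), Nat.factorial_succ t, Nat.factorial_succ k]
    have hf1 : ((t+k+1).factorial : ℚ) ≠ 0 := by exact_mod_cast (t+k+1).factorial_ne_zero
    have hf2 : (t.factorial : ℚ) ≠ 0 := by exact_mod_cast t.factorial_ne_zero
    have hf3 : (k.factorial : ℚ) ≠ 0 := by exact_mod_cast k.factorial_ne_zero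
    have hpos : ((t:ℚ)+k+2) ≠ 0 := by positivity
    push_cast
    field_simp
    ring

lemma Icc_pow_eq (m n : ℕ) (hm : 1 ≤ m) :
    ∑ d ∈ Finset.Icc 1 n, (d:ℚ)^m = ∑ k ∈ Finset.range (n+1), (k:ℚ)^m := by
  have h : Finset.range (n+1) = insert 0 (Finset.Icc 1 n) := by
    ext x; simp; omega
  rw [h, Finset.sum_insert (by simp)]
  rw [Nat.cast_zero, zero_pow (by omega), zero_add]

noncomputable def Rtk (t k : ℕ) : ℚ[X] :=
  ∑ j ∈ Finset.range (k+1), C ((k.choose j : ℚ) * (-1:ℚ)^(k-j)) * (X^j * Sp (t + (k - j)))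

lemma Rtk_eval (t k n : ℕ) (ht : 1 ≤ t) :
    (Rtk t k).eval (n:ℚ) = ∑ d ∈ Finset.Icc 1 n, (d:ℚ)^t * ((n:ℚ) - d)^k := by
  have hrhs : ∀ d : ℕ, ((n:ℚ) - d)^k
      = ∑ j ∈ Finset.range (k+1), (n:ℚ)^j * (-(d:ℚ))^(k-j) * (k.choose j) := by
    intro d
    rw [sub_eq_add_neg, add_pow]
  calc (Rtk t k).eval (n:ℚ)
      = ∑ j ∈ Finset.range (k+1), (k.choose j : ℚ) * (-1:ℚ)^(k-j) * ((n:ℚ)^j *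
          ∑ d ∈ Finset.Icc 1 n, (d:ℚ)^(t + (k-j))) := by
        rw [Rtk, eval_finset_sum]
        refine Finset.sum_congr rfl fun j _ => ?_
        rw [Icc_pow_eq _ _ (by omega), ← Sp_eval]
        simp [eval_mul, eval_pow]
    _ = ∑ j ∈ Finset.range (k+1), ∑ d ∈ Finset.Icc 1 n,
          (d:ℚ)^t * ((n:ℚ)^j * (-(d:ℚ))^(k-j) * (k.choose j)) := by
        refine Finset.sum_congr rfl fun j _ => ?_
        rw [Finset.mul_sum, Finset.mul_sum]
        refine Finset.sum_congr rfl fun d _ => ?_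
        rw [neg_pow, pow_add]
        ring
    _ = ∑ d ∈ Finset.Icc 1 n, (d:ℚ)^t * ((n:ℚ) - d)^k := by
        rw [Finset.sum_comm]
        refine Finset.sum_congr rfl fun d _ => ?_
        rw [hrhs d, Finset.mul_sum]

lemma Rtk_natDegree_le (t k : ℕ) : (Rtk t k).natDegree ≤ t + k + 1 := by
  apply Polynomial.natDegree_sum_le_of_forall_le
  intro j hj
  simp only [Finset.mem_range] at hj
  refine le_trans (natDegree_C_mul_le _ _) (le_trans (natDegree_mul_le) ?_)
  rw [natDegree_X_pow, Sp_natDegree]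
  omega

lemma Rtk_coeff (t k : ℕ) :
    (Rtk t k).coeff (t+k+1) = (t.factorial * k.factorial : ℚ) / (t+k+1).factorial := by
  rw [Rtk, finset_sum_coeff, ← beta_id k t, ← Finset.sum_range_reflect
    (fun j => (-1:ℚ)^j * (k.choose j) / (t+j+1)) (k+1)]
  refine Finset.sum_congr rfl fun j hj => ?_
  simp only [Finset.mem_range] at hj
  have hjk : j ≤ k := by omega
  have h1 : k + 1 - 1 - j = k - j := by omega
  rw [h1, coeff_C_mul]
  have h2 : t + k + 1 = (t + (k - j) + 1) + j := by omega
  rw [h2, coeff_X_pow_mul]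
  have h3 : (Sp (t + (k-j))).coeff (t + (k-j) + 1) = 1/((t:ℚ) + (k - j : ℕ) + 1) := by
    rw [Sp_coeff]; push_cast; ring_nf
  rw [h3, Nat.choose_symm hjk]
  have h4 : ((k - j : ℕ) : ℚ) = (k:ℚ) - j := by
    push_cast [Nat.cast_sub hjk]; ring
  rw [h4]
  ring

lemma conv (t : ℕ) (ht : 1 ≤ t) (P : ℚ[X]) :
    ∃ R : ℚ[X], (∀ n : ℕ, R.eval (n:ℚ) = ∑ d ∈ Finset.Icc 1 n, (d:ℚ)^t * P.eval ((n - d : ℕ) : ℚ))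
      ∧ R.natDegree ≤ P.natDegree + t + 1
      ∧ R.coeff (P.natDegree + t + 1)
        = P.coeff P.natDegree *
            ((t.factorial * P.natDegree.factorial : ℚ) / (t + P.natDegree + 1).factorial) := by
  set D := P.natDegree with hD
  refine ⟨∑ k ∈ Finset.range (D+1), C (P.coeff k) * Rtk t k, ?_, ?_, ?_⟩
  · intro n
    rw [eval_finset_sum]
    calc ∑ k ∈ Finset.range (D+1), (C (P.coeff k) * Rtk t k).eval (n:ℚ)
        = ∑ k ∈ Finset.range (D+1), ∑ d ∈ Finset.Icc 1 n,
            (d:ℚ)^t * (P.coeff k * ((n:ℚ)-d)^k) := by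
          refine Finset.sum_congr rfl fun k _ => ?_
          rw [eval_mul, eval_C, Rtk_eval t k n ht, Finset.mul_sum]
          exact Finset.sum_congr rfl fun d _ => by ring
      _ = ∑ d ∈ Finset.Icc 1 n, (d:ℚ)^t * P.eval (((n - d : ℕ) : ℚ)) := by
          rw [Finset.sum_comm]
          refine Finset.sum_congr rfl fun d hd => ?_
          have hdn : d ≤ n := (Finset.mem_Icc.mp hd).2
          rw [← Finset.mul_sum]
          congr 1
          rw [Polynomial.eval_eq_sum_range, Nat.cast_sub hdn]
  · apply Polynomial.natDegree_sum_le_of_forall_le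
    intro k hk
    simp only [Finset.mem_range] at hk
    refine le_trans (natDegree_C_mul_le _ _) (le_trans (Rtk_natDegree_le t k) ?_)
    omega
  · rw [finset_sum_coeff]
    rw [Finset.sum_eq_single_of_mem D (Finset.self_mem_range_succ D)]
    · rw [coeff_C_mul]
      congr 1
      have : D + t + 1 = t + D + 1 := by omega
      rw [this, Rtk_coeff]
    · intro k hk hkD
      simp only [Finset.mem_range] at hk
      have hklt : k < D := by omega
      rw [coeff_C_mul, Polynomial.coeff_eq_zero_of_natDegree_lt
        (lt_of_le_of_lt (Rtk_natDegree_le t k) (by omega)), mul_zero]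


noncomputable def pisum (r : ℕ) (t : Fin r → ℕ) (n : ℕ) : ℚ :=
  ∑ d ∈ (Fintype.piFinset fun _ : Fin r => Finset.range (n + 1)).filter
      (fun d => (∀ i, 1 ≤ d i) ∧ (∑ i, d i) ≤ n),
    ∏ i, (d i : ℚ) ^ (t i)

lemma pisum_zero (t : Fin 0 → ℕ) (n : ℕ) : pisum 0 t n = 1 := by
  unfold pisum
  rw [Finset.filter_true_of_mem (by intro d _; exact ⟨fun i => i.elim0, by simp⟩)]
  simp [Fintype.piFinset]

lemma bridge (r : ℕ) (t : Fin (r+1) → ℕ) (n : ℕ) :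
    pisum (r+1) t n
      = ∑ d0 ∈ Finset.Icc 1 n, (d0:ℚ)^(t 0) * pisum r (fun i => t i.succ) (n - d0) := by
  unfold pisum
  set T : ℕ → Finset (Fin r → ℕ) := fun d0 =>
    (Fintype.piFinset fun _ : Fin r => Finset.range (n - d0 + 1)).filter
      (fun d => (∀ i, 1 ≤ d i) ∧ (∑ i, d i) ≤ n - d0) with hT
  rw [eq_comm]
  calc ∑ d0 ∈ Finset.Icc 1 n, (d0:ℚ)^(t 0) * ∑ e ∈ T d0, ∏ i, (e i:ℚ)^(t i.succ)
      = ∑ d0 ∈ Finset.Icc 1 n, ∑ e ∈ T d0, (d0:ℚ)^(t 0) * ∏ i, (e i:ℚ)^(t i.succ) := by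
        exact Finset.sum_congr rfl fun d0 _ => Finset.mul_sum _ _ _
    _ = ∑ p ∈ (Finset.Icc 1 n).sigma T, (p.1:ℚ)^(t 0) * ∏ i, (p.2 i:ℚ)^(t i.succ) :=
        Finset.sum_sigma' (Finset.Icc 1 n) T
          (fun d0 e => (d0:ℚ)^(t 0) * ∏ i, (e i:ℚ)^(t i.succ))
    _ = _ := by
        apply Finset.sum_nbij' (fun p => Fin.cons p.1 p.2) (fun d => ⟨d 0, Fin.tail d⟩)
        · -- hi : sigma → filter set
          rintro ⟨d0, e⟩ hp
          simp only [Finset.mem_sigma, Finset.mem_Icc, hT, Finset.mem_filter,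
            Fintype.mem_piFinset, Finset.mem_range] at hp
          obtain ⟨⟨hd1, hd2⟩, he, ⟨he1, he2⟩⟩ := hp
          simp only [Finset.mem_filter, Fintype.mem_piFinset, Finset.mem_range]
          refine ⟨fun i => ?_, fun i => ?_, ?_⟩
          · induction i using Fin.cases with
            | zero => simpa using by omega
            | succ i => simp only [Fin.cons_succ]; have := he i; omega
          · induction i using Fin.cases with
            | zero => simpa using hd1
            | succ i => simp only [Fin.cons_succ]; exact he1 i
          · rw [Fin.sum_univ_succ]
            simp only [Fin.cons_zero, Fin.cons_succ]
            omega
        · -- hj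
          intro d hd
          simp only [Finset.mem_filter, Fintype.mem_piFinset, Finset.mem_range] at hd
          obtain ⟨hdm, hd1, hd2⟩ := hd
          have hsum : (∑ i, d i) = d 0 + ∑ i : Fin r, d i.succ := Fin.sum_univ_succ _
          have hd0n : d 0 ≤ n := by
            have : d 0 ≤ ∑ i, d i :=
              Finset.single_le_sum (fun i _ => Nat.zero_le _) (Finset.mem_univ 0)
            omega
          simp only [Finset.mem_sigma, Finset.mem_Icc, hT, Finset.mem_filter,
            Fintype.mem_piFinset, Finset.mem_range]
          have htail : (∑ i : Fin r, Fin.tail d i) = ∑ i : Fin r, d i.succ := rfl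
          refine ⟨⟨hd1 0, hd0n⟩, fun i => ?_, fun i => hd1 i.succ, by omega⟩
          · have : d i.succ ≤ ∑ i : Fin r, d i.succ :=
              Finset.single_le_sum (f := fun i : Fin r => d i.succ)
                (fun i _ => Nat.zero_le _) (Finset.mem_univ i)
            have : Fin.tail d i = d i.succ := rfl
            simp only [this]
            omega
        · rintro ⟨d0, e⟩ _
          simp [Fin.tail_cons]
        · intro d _
          exact Fin.cons_self_tail d
        · rintro ⟨d0, e⟩ _
          rw [Fin.prod_univ_succ]
          simp [Fin.cons_zero, Fin.cons_succ]

lemma main_ind : ∀ (r : ℕ) (t : Fin r → ℕ), (∀ i, 1 ≤ t i) →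
    ∃ P : ℚ[X], P.natDegree = (∑ i, t i) + r ∧ 0 < P.coeff ((∑ i, t i) + r) ∧
      ∀ n : ℕ, pisum r t n = P.eval (n:ℚ) := by
  intro r
  induction r with
  | zero =>
    intro t ht
    refine ⟨1, by simp, by simp, fun n => by simp [pisum_zero]⟩
  | succ r ih =>
    intro t ht
    obtain ⟨P, hdeg, hpos, heval⟩ := ih (fun i => t i.succ) (fun i => ht i.succ)
    obtain ⟨R, hReval, hRdegle, hRcoeff⟩ := conv (t 0) (ht 0) P
    set D := P.natDegree with hD
    set N := D + t 0 + 1 with hN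
    have hfac : 0 < (((t 0).factorial * D.factorial : ℕ) : ℚ) / (((t 0) + D + 1).factorial : ℚ) := by
      apply div_pos
      · exact_mod_cast Nat.mul_pos (Nat.factorial_pos _) (Nat.factorial_pos _)
      · exact_mod_cast Nat.factorial_pos _
    have hfac' : 0 < ((t 0).factorial : ℚ) * (D.factorial : ℚ) / (((t 0) + D + 1).factorial : ℚ) := by
      push_cast at hfac
      exact hfac
    have hposD : 0 < P.coeff D := by rw [hdeg]; exact hpos
    have hcoeffpos : 0 < R.coeff N := by
      rw [hRcoeff]
      exact mul_pos hposD hfac'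
    have hNdeg : R.natDegree = N := le_antisymm hRdegle (le_natDegree_of_ne_zero hcoeffpos.ne')
    have hsumN : (∑ i : Fin (r+1), t i) + (r+1) = N := by
      rw [Fin.sum_univ_succ]
      omega
    refine ⟨R, by rw [hsumN, hNdeg], by rw [hsumN]; exact hcoeffpos, fun n => ?_⟩
    rw [bridge, hReval n]
    exact Finset.sum_congr rfl fun d0 _ => by rw [heval]

/-- the sum ∑_{d₁,…,d_r ≥ 1, d₁+⋯+d_r ≤ n} ∏ dᵢ^{tᵢ} is a polynomial in n
of degree t₁+⋯+t_r+r with zero constant term. -/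
theorem stmt0 (r : ℕ) (hr : 1 ≤ r) (t : Fin r → ℕ) (ht : ∀ i, 1 ≤ t i) :
    ∃ P : Polynomial ℚ, P.eval 0 = 0 ∧ P.degree = (((∑ i, t i) + r : ℕ) : WithBot ℕ) ∧
      ∀ n : ℕ,
        (∑ d ∈ (Fintype.piFinset fun _ : Fin r => Finset.range (n + 1)).filter
            (fun d => (∀ i, 1 ≤ d i) ∧ (∑ i, d i) ≤ n),
          ∏ i, (d i : ℚ) ^ (t i)) = P.eval (n : ℚ) := by
  obtain ⟨P, hdeg, hpos, heval⟩ := main_ind r t ht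
  have hP0 : P ≠ 0 := fun h => by simp [h] at hpos
  have hzero : P.eval 0 = 0 := by
    have h0 := heval 0
    rw [Nat.cast_zero] at h0
    rw [← h0]
    unfold pisum
    have hemp : ((Fintype.piFinset fun _ : Fin r => Finset.range (0 + 1)).filter
        (fun d => (∀ i, 1 ≤ d i) ∧ (∑ i, d i) ≤ 0)) = ∅ := by
      apply Finset.filter_false_of_mem
      rintro d _ ⟨h1, h2⟩
      have hle : d ⟨0, hr⟩ ≤ ∑ i, d i :=
        Finset.single_le_sum (fun i _ => Nat.zero_le _) (Finset.mem_univ _)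
      have := h1 ⟨0, hr⟩
      omega
    rw [hemp, Finset.sum_empty]
  refine ⟨P, hzero, ?_, fun n => heval n⟩
  rw [Polynomial.degree_eq_natDegree hP0, hdeg]
end

section
/- Let x = e^z, y = e^w be formal exponentials, and set f = log((q)_∞) + ∑_{n≥1} log(1 − x y qⁿ) − ∑_{n≥1} log(1 − x qⁿ) − log((yq)_∞), where (a)_∞ = ∏_{n≥0}(1−a qⁿ). Let D_x = x d/dx. Then for every t ≥ 1, evaluating at x = 1 gives the identity D_x^t f |_{x=1} = −∑_{j ≥ 1} ((t+j−1)!/j!) [t+j] w^j in ℚ[[q]][[w]], where [s] = (1/(s−1)!) ∑_{n,d ≥ 1} d^{s−1} q^{nd}. -/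
open PowerSeries

/-- Pairs (n,d) with n,d ≥ 1 and n·d = N. -/
def qPairs (N : ℕ) : Finset (ℕ × ℕ) :=
  (Finset.range (N + 1) ×ˢ Finset.range (N + 1)).filter
    (fun p => 1 ≤ p.1 ∧ 1 ≤ p.2 ∧ p.1 * p.2 = N)

/-- coefficient of z^k in e^{dz}, namely d^k/k!. -/
noncomputable def expCoeff (k d : ℕ) : ℚ := (d : ℚ) ^ k / (k.factorial : ℚ)

/-- The depth-one bracket [s] = (1/(s-1)!) ∑_{n,d≥1} d^{s-1} q^{nd} ∈ ℚ[[q]]. -/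
noncomputable def bracket (s : ℕ) : PowerSeries ℚ :=
  PowerSeries.mk fun N => ((s - 1).factorial : ℚ)⁻¹ * ∑ p ∈ qPairs N, (p.2 : ℚ) ^ (s - 1)

/-- f = log((q)_∞) + ∑_{n≥1} log(1-xyqⁿ) - ∑_{n≥1} log(1-xqⁿ) - log((yq)_∞)
with x = e^z, y = e^w, all logs expanded by log(1-u) = -∑_{d≥1} u^d/d, viewed as a
power series in z whose coefficients are power series in w over ℚ[[q]].
The coefficient of z^k w^j q^N is ∑_{nd=N} (1/d)·(coefficient of z^k w^j in
(-x^d y^d + x^d + y^d - 1)). -/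
noncomputable def fBO : PowerSeries (PowerSeries (PowerSeries ℚ)) :=
  PowerSeries.mk fun k => PowerSeries.mk fun j => PowerSeries.mk fun N =>
    ∑ p ∈ qPairs N, ((p.2 : ℚ))⁻¹ *
      (-(expCoeff k p.2) * (expCoeff j p.2)
        + (expCoeff k p.2) * (if j = 0 then 1 else 0)
        + (if k = 0 then 1 else 0) * (expCoeff j p.2)
        - (if k = 0 then 1 else 0) * (if j = 0 then 1 else 0))

/-- for t ≥ 1, D_x^t f |_{x=1} (= t! times the z^t-coefficient of f)
equals -∑_{j≥1} ((t+j-1)!/j!) [t+j] w^j in ℚ[[q]][[w]]. -/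
theorem stmt5 (t : ℕ) (ht : 1 ≤ t) :
    (t.factorial : ℚ) • (PowerSeries.coeff (R := PowerSeries (PowerSeries ℚ)) t fBO)
      = PowerSeries.mk fun j => if j = 0 then 0 else
          (-(((t + j - 1).factorial : ℚ) / (j.factorial : ℚ))) • bracket (t + j) := by
  have ht' : t ≠ 0 := by omega
  ext j N
  simp only [fBO, bracket, PowerSeries.coeff_smul, map_smul, coeff_mk, smul_eq_mul, expCoeff, if_neg ht']
  split_ifs with hj
  · subst hj
    simp only [pow_zero, Nat.factorial_zero, Nat.cast_one, div_one, map_zero]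
    rw [Finset.mul_sum]
    apply Finset.sum_eq_zero
    intro p _
    ring
  · rw [map_smul, coeff_mk, smul_eq_mul, Finset.mul_sum, Finset.mul_sum]
    rw [Finset.mul_sum]
    apply Finset.sum_congr rfl
    intro p _
    set d : ℚ := (p.2 : ℚ) with hd
    have hs : t + j - 1 + 1 = t + j := by omega
    have hfac : ((t + j - 1).factorial : ℚ) ≠ 0 := by positivity
    have hjf : ((j).factorial : ℚ) ≠ 0 := by positivity
    have htf : ((t).factorial : ℚ) ≠ 0 := by positivity
    by_cases hd0 : d = 0
    · have h1 : d ^ t = 0 := by rw [hd0]; exact zero_pow ht'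
      have h2 : d ^ (t + j - 1) = 0 := by rw [hd0]; exact zero_pow (by omega)
      simp [hd0, h1, h2]
      right; right; omega
    · have hpow : d ^ t * d ^ j = d * d ^ (t + j - 1) := by
        rw [← pow_add, ← pow_succ']
        congr 1
        omega
      field_simp
      ring_nf
      linear_combination (-1 : ℚ) * hpow
end

section
/- Let x = e^z and y = e^w. For every integer m ≥ 2, the coefficient of z^{m−1}w (and also of z w^{m−1}) in the formal power series expansion of (q)_∞(xyq)_∞/((xq)_∞(yq)_∞) ∈ ℚ[[q]][[z,w]] equals −[m], where [m] = (1/(m−1)!)∑_{n,d≥1} d^{m−1} q^{nd}. -/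
open PowerSeries

/-- ℚ[[w]] -/
abbrev Rw : Type := PowerSeries ℚ
/-- ℚ[[w]][[z]] -/
abbrev Rz : Type := PowerSeries Rw
/-- ℚ[[w]][[z]][[q]] -/
abbrev Rq : Type := PowerSeries Rz

/-- x = e^z ∈ ℚ[[w]][[z]]. -/
noncomputable def xe : Rz := PowerSeries.mk fun k => PowerSeries.C (R := ℚ) ((k.factorial : ℚ)⁻¹)
/-- y = e^w ∈ ℚ[[w]][[z]]. -/
noncomputable def ye : Rz := PowerSeries.C (R := Rw) (PowerSeries.mk fun j => (j.factorial : ℚ)⁻¹)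

/-- partial numerator ∏_{n=1}^N (1-qⁿ)(1-xyqⁿ). -/
noncomputable def numerF (N : ℕ) : Rq :=
  ∏ n ∈ Finset.Icc 1 N,
    ((1 - PowerSeries.X ^ n) * (1 - PowerSeries.C (R := Rz) (xe * ye) * PowerSeries.X ^ n))

/-- partial denominator ∏_{n=1}^N (1-xqⁿ)(1-yqⁿ). -/
noncomputable def denomF (N : ℕ) : Rq :=
  ∏ n ∈ Finset.Icc 1 N,
    ((1 - PowerSeries.C (R := Rz) xe * PowerSeries.X ^ n) *
      (1 - PowerSeries.C (R := Rz) ye * PowerSeries.X ^ n))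

/-- F = (q)_∞(xyq)_∞/((xq)_∞(yq)_∞) ∈ ℚ[[w]][[z]][[q]]: its q^N-coefficient is that of
the stabilizing partial product ∏_{n=1}^N (1-qⁿ)(1-xyqⁿ)/((1-xqⁿ)(1-yqⁿ)). -/
noncomputable def FBO : Rq :=
  PowerSeries.mk fun N =>
    PowerSeries.coeff (R := Rz) N (numerF N * PowerSeries.invOfUnit (denomF N) 1)

/-- The coefficient of z^m w^n in F, an element of ℚ[[q]]. -/
noncomputable def zwCoeff (m n : ℕ) : PowerSeries ℚ :=
  PowerSeries.mk fun N =>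
    PowerSeries.coeff (R := ℚ) n (PowerSeries.coeff (R := Rw) m (PowerSeries.coeff (R := Rz) N FBO))


section Aux

variable {T : Type*} [CommRing T]

lemma prod_add_nil (e : T) (he : e * e = 0) {ι : Type*} [DecidableEq ι] (s : Finset ι)
    (f g : ι → T) :
    ∏ i ∈ s, (f i + e * g i)
      = ∏ i ∈ s, f i + e * ∑ i ∈ s, g i * ∏ k ∈ s.erase i, f k := by
  classical
  induction s using Finset.induction with
  | empty => simp
  | @insert a s ha ih =>
    rw [Finset.prod_insert ha, ih, Finset.prod_insert ha, Finset.sum_insert ha,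
      Finset.erase_insert ha]
    have hs : ∑ i ∈ s, g i * ∏ k ∈ (insert a s).erase i, f k
        = f a * ∑ i ∈ s, g i * ∏ k ∈ s.erase i, f k := by
      rw [Finset.mul_sum]
      refine Finset.sum_congr rfl fun i hi => ?_
      have hia : a ≠ i := fun h => ha (h ▸ hi)
      rw [Finset.erase_insert_of_ne hia, Finset.prod_insert (by
        simp only [Finset.mem_erase]; exact fun h => ha h.2)]
      ring
    rw [hs]
    set P := ∏ i ∈ s, f i
    set S := ∑ i ∈ s, g i * ∏ k ∈ s.erase i, f k
    linear_combination (g a * S) * he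

noncomputable def Jser (E : T) (n : ℕ) : PowerSeries T :=
  PowerSeries.mk fun k => if n ∣ k then E ^ (k / n) else 0

lemma Jser_inv (E : T) {n : ℕ} (hn : 1 ≤ n) :
    (1 - PowerSeries.C (R := T) E * PowerSeries.X ^ n) * Jser E n = 1 := by
  have h : (1 - PowerSeries.C (R := T) E * PowerSeries.X ^ n) * Jser E n
      = Jser E n - (PowerSeries.C (R := T) E * Jser E n) * PowerSeries.X ^ n := by ring
  rw [h]
  ext k
  rw [map_sub, coeff_mul_X_pow', coeff_C_mul, coeff_one]
  simp only [Jser, coeff_mk]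
  rcases Nat.eq_zero_or_pos k with rfl | hk
  · rw [if_pos (dvd_zero n), if_neg (by omega : ¬ n ≤ 0), if_pos rfl]
    simp
  · rw [if_neg (by omega : ¬ k = 0)]
    by_cases hnk : n ≤ k
    · rw [if_pos hnk]
      by_cases hd : n ∣ k
      · obtain ⟨d, rfl⟩ := hd
        have hd1 : 1 ≤ d := by
          by_contra hcon
          have : d = 0 := by omega
          subst this; simp at hk
        have e2 : n * d - n = n * (d - 1) := by
          have : n * (d - 1) + n = n * d := by rw [← Nat.mul_succ]; congr 1; omega
          omega
        have e1 : n * d / n = d := Nat.mul_div_cancel_left _ (by omega)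
        have e3 : (n * d - n) / n = d - 1 := by
          rw [e2]; exact Nat.mul_div_cancel_left _ (by omega)
        rw [if_pos ⟨d, rfl⟩, if_pos (show n ∣ n * d - n from e2 ▸ ⟨d - 1, rfl⟩), e1, e3]
        have hEd : E ^ d = E * E ^ (d - 1) := by
          rw [← pow_succ']; congr 1; omega
        rw [hEd]; ring
      · have h1 : ¬ n ∣ k - n := fun hdd => hd (by
          have h2 := Nat.dvd_add hdd (dvd_refl n)
          rwa [Nat.sub_add_cancel hnk] at h2)
        rw [if_neg hd, if_neg h1]; ring
    · rw [if_neg hnk, if_neg (fun hdd => by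
        have := Nat.le_of_dvd hk hdd; omega)]
      ring

lemma coeff_X_pow_mul_Jser (E : T) {n N : ℕ} (hn : 1 ≤ n) (hN : n ≤ N) :
    PowerSeries.coeff (R := T) N (PowerSeries.X ^ n * Jser E n)
      = if n ∣ N then E ^ (N / n - 1) else 0 := by
  rw [mul_comm, coeff_mul_X_pow', if_pos hN]
  simp only [Jser, coeff_mk]
  by_cases hd : n ∣ N
  · obtain ⟨d, rfl⟩ := hd
    have hd1 : 1 ≤ d := by
      by_contra hcon
      have : d = 0 := by omega
      subst this; omega
    have e2 : n * d - n = n * (d - 1) := by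
      have : n * (d - 1) + n = n * d := by rw [← Nat.mul_succ]; congr 1; omega
      omega
    rw [if_pos (show n ∣ n * d - n from e2 ▸ ⟨d - 1, rfl⟩), if_pos ⟨d, rfl⟩]
    rw [e2, Nat.mul_div_cancel_left _ (by omega), Nat.mul_div_cancel_left _ (by omega)]
  · have h1 : ¬ n ∣ N - n := fun hdd => hd (by
      have h2 := Nat.dvd_add hdd (dvd_refl n)
      rwa [Nat.sub_add_cancel hN] at h2)
    rw [if_neg hd, if_neg h1]

lemma sum_divisors_qPairs (N : ℕ) (F : ℕ → T) :
    ∑ n ∈ (Finset.Icc 1 N).filter (· ∣ N), F (N / n) = ∑ p ∈ qPairs N, F p.2 := by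
  refine Finset.sum_bij' (fun n _ => (n, N / n)) (fun p _ => p.1) ?_ ?_ ?_ ?_ ?_
  · intro n hn
    simp only [Finset.mem_filter, Finset.mem_Icc] at hn
    obtain ⟨⟨h1, h2⟩, h3⟩ := hn
    simp only [qPairs, Finset.mem_filter, Finset.mem_product, Finset.mem_range]
    refine ⟨⟨by omega, ?_⟩, h1, ?_, Nat.mul_div_cancel' h3⟩
    · have := Nat.div_le_self N n; omega
    · exact Nat.one_le_div_iff (by omega) |>.mpr h2
  · intro p hp
    simp only [qPairs, Finset.mem_filter, Finset.mem_product, Finset.mem_range] at hp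
    obtain ⟨_, h1, h2, h3⟩ := hp
    simp only [Finset.mem_filter, Finset.mem_Icc]
    exact ⟨⟨h1, by nlinarith⟩, ⟨p.2, h3.symm⟩⟩
  · intro n hn; rfl
  · intro p hp
    simp only [qPairs, Finset.mem_filter, Finset.mem_product, Finset.mem_range] at hp
    obtain ⟨_, h1, h2, h3⟩ := hp
    have : N / p.1 = p.2 := by
      rw [← h3]; exact Nat.mul_div_cancel_left _ (by omega)
    exact Prod.ext rfl this
  · intro n hn
    simp only [Finset.mem_filter, Finset.mem_Icc] at hn
    rfl

lemma core (e E : T) (he : e * e = 0) (N : ℕ) :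
    PowerSeries.coeff (R := T) N
      ((∏ n ∈ Finset.Icc 1 N,
          ((1 - PowerSeries.X ^ n) * (1 - PowerSeries.C (R := T) (E * (1 + e)) * PowerSeries.X ^ n))) *
        PowerSeries.invOfUnit
          (∏ n ∈ Finset.Icc 1 N,
            ((1 - PowerSeries.C (R := T) E * PowerSeries.X ^ n) *
              (1 - PowerSeries.C (R := T) (1 + e) * PowerSeries.X ^ n))) 1)
      = (if N = 0 then 1 else 0) + e * ∑ p ∈ qPairs N, (1 - E ^ p.2) := by
  classical
  set s := Finset.Icc 1 N with hs
  set c : PowerSeries T := PowerSeries.C (R := T) e with hc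
  have hcc : c * c = 0 := by rw [hc, ← map_mul, he, map_zero]
  set A : PowerSeries T := ∏ n ∈ s, (1 - PowerSeries.X ^ n) with hA
  set B : PowerSeries T := ∏ n ∈ s, (1 - PowerSeries.C (R := T) E * PowerSeries.X ^ n) with hB
  set SA : PowerSeries T :=
    ∑ n ∈ s, PowerSeries.X ^ n * ∏ k ∈ s.erase n, (1 - PowerSeries.X ^ k) with hSA
  set SB : PowerSeries T :=
    ∑ n ∈ s, (PowerSeries.C (R := T) E * PowerSeries.X ^ n) *
      ∏ k ∈ s.erase n, (1 - PowerSeries.C (R := T) E * PowerSeries.X ^ k) with hSB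
  set G : PowerSeries T :=
    ∑ n ∈ s, (PowerSeries.X ^ n * Jser (1 : T) n
      - PowerSeries.C (R := T) E * (PowerSeries.X ^ n * Jser E n)) with hG
  have hone : ∀ n : ℕ, 1 ≤ n → (1 - PowerSeries.X ^ n) * Jser (1 : T) n = 1 := by
    intro n hn
    have := Jser_inv (1 : T) hn
    rwa [map_one, one_mul] at this
  -- numerator second factor
  have hnum : ∏ n ∈ s, (1 - PowerSeries.C (R := T) (E * (1 + e)) * PowerSeries.X ^ n)
      = B - c * SB := by
    have hfac : ∀ n ∈ s, (1 - PowerSeries.C (R := T) (E * (1 + e)) * PowerSeries.X ^ n)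
        = (1 - PowerSeries.C (R := T) E * PowerSeries.X ^ n)
          + c * (-(PowerSeries.C (R := T) E * PowerSeries.X ^ n)) := by
      intro n _
      rw [map_mul, map_add, map_one, hc]; ring
    rw [Finset.prod_congr rfl hfac, prod_add_nil c hcc]
    have hSB' : ∑ i ∈ s, -(PowerSeries.C (R := T) E * PowerSeries.X ^ i) *
        ∏ k ∈ s.erase i, (1 - PowerSeries.C (R := T) E * PowerSeries.X ^ k) = -SB := by
      rw [hSB, ← Finset.sum_neg_distrib]
      exact Finset.sum_congr rfl fun i _ => by ring
    rw [hSB']; ring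
  -- denominator second factor
  have hden : ∏ n ∈ s, (1 - PowerSeries.C (R := T) (1 + e) * PowerSeries.X ^ n)
      = A - c * SA := by
    have hfac : ∀ n ∈ s, (1 - PowerSeries.C (R := T) (1 + e) * PowerSeries.X ^ n)
        = (1 - PowerSeries.X ^ n) + c * (-(PowerSeries.X ^ n)) := by
      intro n _
      rw [map_add, map_one, hc]; ring
    rw [Finset.prod_congr rfl hfac, prod_add_nil c hcc]
    have hSA' : ∑ i ∈ s, -(PowerSeries.X ^ i) *
        ∏ k ∈ s.erase i, (1 - PowerSeries.X ^ k) = -SA := by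
      rw [hSA, ← Finset.sum_neg_distrib]
      exact Finset.sum_congr rfl fun i _ => by ring
    rw [hSA']; ring
  -- key product identity
  have hGAB : G * (A * B) = B * SA - A * SB := by
    rw [hG, hSA, hSB, Finset.sum_mul, Finset.mul_sum, Finset.mul_sum, ← Finset.sum_sub_distrib]
    refine Finset.sum_congr rfl fun n hn => ?_
    have hn1 : 1 ≤ n := (Finset.mem_Icc.mp hn).1
    have hA' : A = (1 - PowerSeries.X ^ n) * ∏ k ∈ s.erase n, (1 - PowerSeries.X ^ k) :=
      (Finset.mul_prod_erase s _ hn).symm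
    have hB' : B = (1 - PowerSeries.C (R := T) E * PowerSeries.X ^ n) *
        ∏ k ∈ s.erase n, (1 - PowerSeries.C (R := T) E * PowerSeries.X ^ k) :=
      (Finset.mul_prod_erase s _ hn).symm
    have h1 := hone n hn1
    have h2 := Jser_inv E hn1
    rw [hA', hB']
    linear_combination (PowerSeries.X ^ n * (∏ k ∈ s.erase n, (1 - PowerSeries.X ^ k)) *
        ((1 - PowerSeries.C (R := T) E * PowerSeries.X ^ n) *
          ∏ k ∈ s.erase n, (1 - PowerSeries.C (R := T) E * PowerSeries.X ^ k))) * h1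
      - (PowerSeries.C (R := T) E * PowerSeries.X ^ n *
          ((1 - PowerSeries.X ^ n) * ∏ k ∈ s.erase n, (1 - PowerSeries.X ^ k)) *
          ∏ k ∈ s.erase n, (1 - PowerSeries.C (R := T) E * PowerSeries.X ^ k)) * h2
  -- the key factorization
  have hkey :
      (∏ n ∈ s, ((1 - PowerSeries.X ^ n) *
          (1 - PowerSeries.C (R := T) (E * (1 + e)) * PowerSeries.X ^ n)))
        = (1 + c * G) *
          (∏ n ∈ s, ((1 - PowerSeries.C (R := T) E * PowerSeries.X ^ n) *
            (1 - PowerSeries.C (R := T) (1 + e) * PowerSeries.X ^ n))) := by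
    rw [Finset.prod_mul_distrib, Finset.prod_mul_distrib, hnum, hden, ← hA, ← hB]
    linear_combination (-c) * hGAB + (G * B * SA) * hcc
  have hden1 : PowerSeries.constantCoeff (R := T)
      (∏ n ∈ s, ((1 - PowerSeries.C (R := T) E * PowerSeries.X ^ n) *
        (1 - PowerSeries.C (R := T) (1 + e) * PowerSeries.X ^ n))) = 1 := by
    rw [map_prod]
    refine Finset.prod_eq_one fun n hn => ?_
    have hn0 : n ≠ 0 := by have := (Finset.mem_Icc.mp hn).1; omega
    simp [zero_pow hn0]
  have hmain : (∏ n ∈ s, ((1 - PowerSeries.X ^ n) *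
          (1 - PowerSeries.C (R := T) (E * (1 + e)) * PowerSeries.X ^ n))) *
        PowerSeries.invOfUnit
          (∏ n ∈ s, ((1 - PowerSeries.C (R := T) E * PowerSeries.X ^ n) *
            (1 - PowerSeries.C (R := T) (1 + e) * PowerSeries.X ^ n))) 1
      = 1 + c * G := by
    rw [hkey, mul_assoc, PowerSeries.mul_invOfUnit _ _ (by rw [hden1]; rfl), mul_one]
  rw [hmain, map_add, coeff_one, hc, coeff_C_mul]
  congr 1
  congr 1
  rw [hG, map_sum]
  have hterm : ∀ n ∈ s, PowerSeries.coeff (R := T) N (PowerSeries.X ^ n * Jser 1 n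
        - PowerSeries.C (R := T) E * (PowerSeries.X ^ n * Jser E n))
      = if n ∣ N then (1 - E ^ (N / n)) else 0 := by
    intro n hn
    obtain ⟨hn1, hnN⟩ := Finset.mem_Icc.mp hn
    rw [map_sub, coeff_C_mul, coeff_X_pow_mul_Jser _ hn1 hnN, coeff_X_pow_mul_Jser _ hn1 hnN]
    by_cases hd : n ∣ N
    · rw [if_pos hd, if_pos hd, if_pos hd, one_pow]
      have h1 : 1 ≤ N / n := Nat.one_le_div_iff (by omega : 0 < n) |>.mpr hnN
      have hEE : E ^ (N / n) = E * E ^ (N / n - 1) := by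
        rw [← pow_succ']; congr 1; omega
      rw [hEE]
    · simp [hd]
  rw [Finset.sum_congr rfl hterm, ← Finset.sum_filter]
  exact sum_divisors_qPairs N (fun d => 1 - E ^ d)

end Aux

section Aux2

variable {R : Type*} [CommRing R]

lemma coeff_one_mul' (f g : PowerSeries R) :
    PowerSeries.coeff (R := R) 1 (f * g) = PowerSeries.constantCoeff (R := R) f * PowerSeries.coeff (R := R) 1 g
      + PowerSeries.coeff (R := R) 1 f * PowerSeries.constantCoeff (R := R) g := by
  rw [coeff_mul, Finset.Nat.sum_antidiagonal_eq_sum_range_succ_mk]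
  rw [Finset.sum_range_succ, Finset.sum_range_succ, Finset.sum_range_zero]
  simp [coeff_zero_eq_constantCoeff]

noncomputable def delta (R : Type*) [CommRing R] : PowerSeries R →+* DualNumber R where
  toFun f := (show TrivSqZeroExt R R from (PowerSeries.constantCoeff (R := R) f, PowerSeries.coeff (R := R) 1 f))
  map_one' := by
    refine TrivSqZeroExt.ext ?_ ?_ <;> simp
  map_mul' f g := by
    refine TrivSqZeroExt.ext ?_ ?_
    · exact map_mul _ f g
    · exact coeff_one_mul' f g
  map_zero' := by refine TrivSqZeroExt.ext ?_ ?_ <;> simp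
  map_add' f g := by refine TrivSqZeroExt.ext ?_ ?_ <;> exact map_add _ f g

@[simp] lemma delta_fst (f : PowerSeries R) :
    (delta R f).fst = PowerSeries.constantCoeff (R := R) f := rfl

@[simp] lemma delta_snd (f : PowerSeries R) :
    (delta R f).snd = PowerSeries.coeff (R := R) 1 f := rfl

lemma delta_C (a : R) : delta R (PowerSeries.C (R := R) a) = TrivSqZeroExt.inl a := by
  refine TrivSqZeroExt.ext ?_ ?_ <;> simp

lemma map_mul_invOfUnit {S : Type*} [CommRing S] (φ : R →+* S) (f g : PowerSeries R)
    (hg : PowerSeries.constantCoeff (R := R) g = 1) :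
    PowerSeries.map φ (f * PowerSeries.invOfUnit g 1)
      = PowerSeries.map φ f * PowerSeries.invOfUnit (PowerSeries.map φ g) 1 := by
  rw [map_mul]
  congr 1
  have h1 : PowerSeries.map φ g * PowerSeries.map φ (PowerSeries.invOfUnit g 1) = 1 := by
    rw [← map_mul, PowerSeries.mul_invOfUnit g 1 (by rw [hg]; rfl), map_one]
  have h2 : PowerSeries.map φ g * PowerSeries.invOfUnit (PowerSeries.map φ g) 1 = 1 :=
    PowerSeries.mul_invOfUnit _ 1 (by
      rw [show PowerSeries.constantCoeff (R := S) (PowerSeries.map φ g) = φ (PowerSeries.constantCoeff (R := R) g) from rfl, hg, map_one]; rfl)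
  calc PowerSeries.map φ (PowerSeries.invOfUnit g 1)
      = PowerSeries.map φ (PowerSeries.invOfUnit g 1) *
        (PowerSeries.map φ g * PowerSeries.invOfUnit (PowerSeries.map φ g) 1) := by
        rw [h2, mul_one]
    _ = PowerSeries.invOfUnit (PowerSeries.map φ g) 1 *
        (PowerSeries.map φ g * PowerSeries.map φ (PowerSeries.invOfUnit g 1)) := by ring
    _ = PowerSeries.invOfUnit (PowerSeries.map φ g) 1 := by rw [h1, mul_one]

end Aux2

lemma expw_eq : (PowerSeries.mk fun j => ((j.factorial : ℚ))⁻¹ : PowerSeries ℚ)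
    = PowerSeries.exp ℚ := by
  ext j
  simp [PowerSeries.coeff_exp, one_div, PowerSeries.coeff_mk]

lemma coeff_exp_pow (d j : ℕ) :
    PowerSeries.coeff (R := ℚ) j ((PowerSeries.exp ℚ) ^ d) = (d : ℚ) ^ j * ((j.factorial : ℚ))⁻¹ := by
  rw [PowerSeries.exp_pow_eq_rescale_exp, PowerSeries.coeff_rescale, PowerSeries.coeff_exp]
  simp [one_div]

lemma snd_eps_mul {R : Type*} [CommRing R] (a : DualNumber R) :
    (DualNumber.eps * a).snd = a.fst := by
  simp [TrivSqZeroExt.snd_mul]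

lemma cc_denomF (N : ℕ) : PowerSeries.constantCoeff (R := Rz) (denomF N) = 1 := by
  rw [denomF, map_prod]
  refine Finset.prod_eq_one fun n hn => ?_
  have hn0 : n ≠ 0 := by have := (Finset.mem_Icc.mp hn).1; omega
  simp [zero_pow hn0]

lemma part1 (m : ℕ) (hm : 2 ≤ m) : zwCoeff (m - 1) 1 = -bracket m := by
  have hm1 : m - 1 ≠ 0 := by omega
  ext N
  rw [zwCoeff, PowerSeries.coeff_mk, FBO, PowerSeries.coeff_mk, map_neg, bracket,
    PowerSeries.coeff_mk]
  set D := DualNumber ℚ with hD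
  set Φ : Rz →+* PowerSeries D := PowerSeries.map (delta ℚ) with hΦ
  set e : PowerSeries D := PowerSeries.C (R := D) DualNumber.eps with he
  set E : PowerSeries D := PowerSeries.map (TrivSqZeroExt.inlHom ℚ ℚ) (PowerSeries.exp ℚ)
    with hE
  have hee : e * e = 0 := by
    rw [he, ← map_mul, DualNumber.eps_mul_eps, map_zero]
  have hΦxe : Φ xe = E := by
    refine PowerSeries.ext fun k => ?_
    rw [hΦ, PowerSeries.coeff_map, hE, PowerSeries.coeff_map, xe, PowerSeries.coeff_mk,
      delta_C, PowerSeries.coeff_exp]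
    simp [one_div]
    rfl
  have hΦye : Φ ye = 1 + e := by
    rw [hΦ, ye, PowerSeries.map_C]
    have h2 : delta ℚ (PowerSeries.mk fun j => ((j.factorial : ℚ))⁻¹) = 1 + DualNumber.eps := by
      refine TrivSqZeroExt.ext ?_ ?_
      · rw [delta_fst, TrivSqZeroExt.fst_add, TrivSqZeroExt.fst_one, DualNumber.fst_eps,
          PowerSeries.constantCoeff_mk]
        norm_num
      · rw [delta_snd, TrivSqZeroExt.snd_add, TrivSqZeroExt.snd_one, DualNumber.snd_eps,
          PowerSeries.coeff_mk]
        norm_num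
    rw [h2, he, map_add, map_one]
  have h1 : ∀ g : Rz, PowerSeries.coeff (R := ℚ) 1 (PowerSeries.coeff (R := Rw) (m - 1) g)
      = (PowerSeries.coeff (R := D) (m - 1) (Φ g)).snd := fun g => by
    rw [hΦ, PowerSeries.coeff_map, delta_snd]
  rw [h1, show Φ (PowerSeries.coeff (R := Rz) N (numerF N * PowerSeries.invOfUnit (denomF N) 1))
      = PowerSeries.coeff N
          (PowerSeries.map Φ (numerF N * PowerSeries.invOfUnit (denomF N) 1)) from
      (PowerSeries.coeff_map (f := Φ) N _).symm,
    map_mul_invOfUnit Φ _ _ (cc_denomF N)]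
  have hnum : PowerSeries.map Φ (numerF N)
      = ∏ n ∈ Finset.Icc 1 N, ((1 - PowerSeries.X ^ n) *
          (1 - PowerSeries.C (R := PowerSeries D) (E * (1 + e)) * PowerSeries.X ^ n)) := by
    rw [numerF, map_prod]
    refine Finset.prod_congr rfl fun n _ => ?_
    rw [map_mul, map_sub, map_one, map_pow, PowerSeries.map_X, map_sub, map_one, map_mul,
      map_pow, PowerSeries.map_X, PowerSeries.map_C, map_mul, hΦxe, hΦye]
  have hden : PowerSeries.map Φ (denomF N)
      = ∏ n ∈ Finset.Icc 1 N, ((1 - PowerSeries.C (R := PowerSeries D) E * PowerSeries.X ^ n) *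
          (1 - PowerSeries.C (R := PowerSeries D) (1 + e) * PowerSeries.X ^ n)) := by
    rw [denomF, map_prod]
    refine Finset.prod_congr rfl fun n _ => ?_
    rw [map_mul, map_sub, map_one, map_mul, map_pow, PowerSeries.map_X, PowerSeries.map_C,
      map_sub, map_one, map_mul, map_pow, PowerSeries.map_X, PowerSeries.map_C, hΦxe, hΦye]
  rw [hnum, hden, core e E hee N, map_add, he, PowerSeries.coeff_C_mul]
  have hite : PowerSeries.coeff (R := D) (m - 1)
      (if N = 0 then (1 : PowerSeries D) else 0) = 0 := by
    split_ifs <;> simp [PowerSeries.coeff_one, hm1]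
  rw [hite, zero_add, snd_eps_mul, map_sum, TrivSqZeroExt.fst_sum]
  have hcoe : ∀ d : ℕ, PowerSeries.coeff (R := D) (m - 1) (E ^ d)
      = TrivSqZeroExt.inl ((d : ℚ) ^ (m - 1) * (((m - 1).factorial : ℚ))⁻¹) := by
    intro d
    rw [hE, ← map_pow, PowerSeries.coeff_map, coeff_exp_pow]
    rfl
  have hfst : ∀ p ∈ qPairs N, (PowerSeries.coeff (R := D) (m - 1) (1 - E ^ p.2)).fst
      = -((p.2 : ℚ) ^ (m - 1) * (((m - 1).factorial : ℚ))⁻¹) := by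
    intro p _
    rw [map_sub, PowerSeries.coeff_one, if_neg hm1, zero_sub, hcoe,
      TrivSqZeroExt.fst_neg, TrivSqZeroExt.fst_inl]
  rw [Finset.sum_congr rfl hfst, Finset.mul_sum, ← Finset.sum_neg_distrib]
  exact Finset.sum_congr rfl fun p _ => by ring

set_option maxHeartbeats 2000000 in
set_option synthInstance.maxHeartbeats 1000000 in
lemma part2 (m : ℕ) (hm : 2 ≤ m) : zwCoeff 1 (m - 1) = -bracket m := by
  have hm1 : m - 1 ≠ 0 := by omega
  ext N
  rw [zwCoeff, PowerSeries.coeff_mk, FBO, PowerSeries.coeff_mk, map_neg, bracket,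
    PowerSeries.coeff_mk]
  set Φ : Rz →+* DualNumber Rw := delta Rw with hΦ
  set e : DualNumber Rw := DualNumber.eps with he
  set expw : Rw := PowerSeries.mk fun j => ((j.factorial : ℚ))⁻¹ with hexpw
  set E : DualNumber Rw := TrivSqZeroExt.inlHom Rw Rw expw with hE
  have hee : e * e = 0 := DualNumber.eps_mul_eps
  have hΦxe : Φ xe = 1 + e := by
    rw [hΦ]
    refine TrivSqZeroExt.ext ?_ ?_
    · rw [delta_fst, TrivSqZeroExt.fst_add, TrivSqZeroExt.fst_one, he, DualNumber.fst_eps,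
        xe, PowerSeries.constantCoeff_mk]
      norm_num
    · rw [delta_snd, TrivSqZeroExt.snd_add, TrivSqZeroExt.snd_one, he, DualNumber.snd_eps,
        xe, PowerSeries.coeff_mk]
      norm_num
  have hΦye : Φ ye = E := by
    rw [hΦ, ye, ← hexpw, delta_C, hE]
    rfl
  have hrw : PowerSeries.coeff (R := ℚ) (m - 1) (PowerSeries.coeff (R := Rw) 1
        (PowerSeries.coeff (R := Rz) N (numerF N * PowerSeries.invOfUnit (denomF N) 1)))
      = PowerSeries.coeff (R := ℚ) (m - 1)
          ((PowerSeries.coeff (R := DualNumber Rw) N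
            (PowerSeries.map Φ (numerF N * PowerSeries.invOfUnit (denomF N) 1))).snd) := by
    rw [PowerSeries.coeff_map, hΦ, delta_snd]
  rw [hrw, map_mul_invOfUnit Φ _ _ (cc_denomF N)]
  have hnum : PowerSeries.map Φ (numerF N)
      = ∏ n ∈ Finset.Icc 1 N, ((1 - PowerSeries.X ^ n) *
          (1 - PowerSeries.C (R := DualNumber Rw) (E * (1 + e)) * PowerSeries.X ^ n)) := by
    rw [numerF, map_prod]
    refine Finset.prod_congr rfl fun n _ => ?_
    rw [map_mul, map_sub, map_one, map_pow, PowerSeries.map_X, map_sub, map_one, map_mul,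
      map_pow, PowerSeries.map_X, PowerSeries.map_C, map_mul, hΦxe, hΦye, mul_comm (1 + e) E]
  have hden : PowerSeries.map Φ (denomF N)
      = ∏ n ∈ Finset.Icc 1 N, ((1 - PowerSeries.C (R := DualNumber Rw) E * PowerSeries.X ^ n) *
          (1 - PowerSeries.C (R := DualNumber Rw) (1 + e) * PowerSeries.X ^ n)) := by
    rw [denomF, map_prod]
    refine Finset.prod_congr rfl fun n _ => ?_
    rw [map_mul, map_sub, map_one, map_mul, map_pow, PowerSeries.map_X, PowerSeries.map_C,
      map_sub, map_one, map_mul, map_pow, PowerSeries.map_X, PowerSeries.map_C, hΦxe, hΦye,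
      mul_comm]
  rw [hnum, hden, core e E hee N]
  have hsnd : ((if N = 0 then (1 : DualNumber Rw) else 0) + e * ∑ p ∈ qPairs N, (1 - E ^ p.2)).snd
      = ∑ p ∈ qPairs N, (1 - expw ^ p.2) := by
    rw [TrivSqZeroExt.snd_add, he, snd_eps_mul, TrivSqZeroExt.fst_sum]
    have h0 : ((if N = 0 then (1 : DualNumber Rw) else 0)).snd = 0 := by
      split_ifs
      · exact TrivSqZeroExt.snd_one
      · exact TrivSqZeroExt.snd_zero
    rw [h0, zero_add]
    refine Finset.sum_congr rfl fun p _ => ?_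
    rw [TrivSqZeroExt.fst_sub, TrivSqZeroExt.fst_one, hE, ← map_pow,
      TrivSqZeroExt.inlHom_apply, TrivSqZeroExt.fst_inl]
  rw [hsnd, map_sum, Finset.mul_sum, ← Finset.sum_neg_distrib]
  refine Finset.sum_congr rfl fun p _ => ?_
  rw [map_sub, PowerSeries.coeff_one, if_neg hm1, hexpw, expw_eq, coeff_exp_pow]
  ring

/-- for every m ≥ 2, the coefficients of z^{m-1}w and of zw^{m-1} in
(q)_∞(xyq)_∞/((xq)_∞(yq)_∞) both equal -[m]. -/
theorem stmt8 (m : ℕ) (hm : 2 ≤ m) :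
    zwCoeff (m - 1) 1 = -bracket m ∧ zwCoeff 1 (m - 1) = -bracket m := by
  exact ⟨part1 m hm, part2 m hm⟩
end

section
/- The three q-series identities hold in ℚ[[q]]: Z(2) = [2], Z(3) = 2[3], and Z(4) = [4] − (1/6)[2], where Z(s) = ∑_{n ≥ 1} Q_s^O(qⁿ)/(1−qⁿ)^s with Q_s^O(t) = t^{s/2} for s even and t^{(s−1)/2}(t+1) for s odd, and [s] = (1/(s−1)!)∑_{n,d≥1} d^{s−1} q^{nd}. -/
open PowerSeries

/-- Z_Q(s) = ∑_{n≥1} Q(qⁿ)/(1-qⁿ)^s ∈ ℚ[[q]] for a numerator polynomial Q with Q(0)=0. -/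
noncomputable def ZO (Q : Polynomial ℚ) (s : ℕ) : PowerSeries ℚ :=
  PowerSeries.mk fun N => ∑ n ∈ Finset.Icc 1 N, PowerSeries.coeff N
    (Polynomial.eval₂ (PowerSeries.C (R := ℚ)) (PowerSeries.X ^ n) Q *
      ((1 - PowerSeries.X ^ n) ^ s)⁻¹)

namespace Stmt18Aux

def c2 (t : ℕ) : ℚ := (t : ℚ)
def c3 (t : ℕ) : ℚ := (t : ℚ) ^ 2
def c4 (t : ℕ) : ℚ := ((t : ℚ) ^ 3 - (t : ℚ)) / 6

lemma qPairs_eq (N : ℕ) : qPairs N = N.divisorsAntidiagonal := by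
  ext p
  simp only [qPairs, Finset.mem_filter, Finset.mem_product, Finset.mem_range,
    Nat.mem_divisorsAntidiagonal]
  constructor
  · rintro ⟨⟨-, -⟩, ha, hb, hab⟩
    exact ⟨hab, by rw [← hab]; exact Nat.mul_ne_zero (by omega) (by omega)⟩
  · rintro ⟨hab, hN⟩
    have hp1 : p.1 ≠ 0 := by rintro h; exact hN (by rw [← hab, h, zero_mul])
    have hp2 : p.2 ≠ 0 := by rintro h; exact hN (by rw [← hab, h, mul_zero])
    have h1 : p.1 ≤ N := Nat.le_of_dvd (Nat.pos_of_ne_zero hN) ⟨p.2, hab.symm⟩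
    have h2 : p.2 ≤ N := Nat.le_of_dvd (Nat.pos_of_ne_zero hN)
      ⟨p.1, by rw [← hab, mul_comm]⟩
    exact ⟨⟨by omega, by omega⟩, by omega, by omega, hab⟩

lemma filter_dvd (N : ℕ) :
    Finset.filter (fun n => n ∣ N) (Finset.Icc 1 N) = N.divisors := by
  ext d
  simp only [Finset.mem_filter, Finset.mem_Icc, Nat.mem_divisors]
  constructor
  · rintro ⟨⟨h1, h2⟩, hd⟩; exact ⟨hd, by omega⟩
  · rintro ⟨hd, hN⟩
    refine ⟨⟨Nat.pos_of_ne_zero fun h => hN ?_, Nat.le_of_dvd (Nat.pos_of_ne_zero hN) hd⟩, hd⟩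
    rw [h] at hd; exact zero_dvd_iff.mp hd

lemma shift_zero {N : ℕ} (n k : ℕ) (c : ℕ → ℚ) (hN : ¬ n ∣ N) :
    (if n * k ≤ N then (if n ∣ N - n * k then c ((N - n * k) / n) else 0) else 0) = 0 := by
  split
  · split
    · exfalso
      rename_i h1 h2
      exact hN (by
        have := Nat.dvd_add h2 (dvd_mul_right n k)
        rwa [Nat.sub_add_cancel h1] at this)
    · rfl
  · rfl

lemma shift_mul {n : ℕ} (hn : 0 < n) (c : ℕ → ℚ) (m k : ℕ) :
    (if n * k ≤ n * m then (if n ∣ n * m - n * k then c ((n * m - n * k) / n) else 0) else 0)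
      = if k ≤ m then c (m - k) else 0 := by
  rcases le_or_gt k m with h | h
  · have e : n * m - n * k = n * (m - k) := by
      rw [Nat.mul_sub]
    rw [if_pos (Nat.mul_le_mul_left n h), e, if_pos (dvd_mul_right n (m - k)),
      Nat.mul_div_cancel_left _ hn, if_pos h]
  · rw [if_neg, if_neg (not_le.mpr h)]
    intro hc
    exact absurd (Nat.le_of_mul_le_mul_left hc hn) (not_le.mpr h)

lemma plain {n : ℕ} (hn : 0 < n) (c : ℕ → ℚ) (m : ℕ) :
    (if n ∣ n * m then c (n * m / n) else 0) = c m := by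
  rw [if_pos (dvd_mul_right n m), Nat.mul_div_cancel_left _ hn]

lemma inv_step {s n : ℕ} (hn : 0 < n) {f P : PowerSeries ℚ}
    (h : f * (1 - X ^ n) ^ s = P) :
    P * ((1 - (X : PowerSeries ℚ) ^ n) ^ s)⁻¹ = f := by
  have hc : PowerSeries.constantCoeff (R := ℚ) ((1 - X ^ n) ^ s) ≠ 0 := by
    simp [zero_pow hn.ne']
  exact ((PowerSeries.eq_mul_inv_iff_mul_eq hc).mpr h).symm

lemma rec2 {n : ℕ} (hn : 0 < n) :
    (PowerSeries.mk fun N => if n ∣ N then c2 (N / n) else 0) * (1 - X ^ n) ^ 2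
      = X ^ (n * 1) := by
  set F : PowerSeries ℚ := PowerSeries.mk fun N => if n ∣ N then c2 (N / n) else 0 with hF
  have expand : F * (1 - X ^ n) ^ 2
      = F - (F * X ^ (n * 1) + F * X ^ (n * 1)) + F * X ^ (n * 2) := by ring
  rw [expand]
  ext N
  simp only [map_sub, map_add, PowerSeries.coeff_mul_X_pow', hF, PowerSeries.coeff_mk,
    PowerSeries.coeff_X_pow]
  by_cases hdvd : n ∣ N
  · obtain ⟨m, rfl⟩ := hdvd
    rw [shift_mul hn c2 m 1, shift_mul hn c2 m 2, plain hn,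
      if_congr (mul_right_inj' hn.ne') rfl rfl]
    rcases m with _ | _ | k
    · norm_num [c2]
    · norm_num [c2]
    · rw [if_pos (show 1 ≤ k + 1 + 1 by omega), if_pos (show 2 ≤ k + 1 + 1 by omega),
        if_neg (show ¬(k + 1 + 1 = 1) by omega),
        show k + 1 + 1 - 1 = k + 1 by omega, show k + 1 + 1 - 2 = k by omega]
      simp only [c2]
      push_cast
      ring
  · rw [shift_zero n 1 c2 hdvd, shift_zero n 2 c2 hdvd, if_neg hdvd,
      if_neg (show ¬(N = n * 1) from fun h => hdvd (by rw [h]; exact dvd_mul_right n 1))]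
    ring

lemma rec3 {n : ℕ} (hn : 0 < n) :
    (PowerSeries.mk fun N => if n ∣ N then c3 (N / n) else 0) * (1 - X ^ n) ^ 3
      = X ^ (n * 2) + X ^ (n * 1) := by
  set F : PowerSeries ℚ := PowerSeries.mk fun N => if n ∣ N then c3 (N / n) else 0 with hF
  have e3 : (PowerSeries.C (R := ℚ) 3 : PowerSeries ℚ) = 3 := map_ofNat _ 3
  have expand : F * (1 - X ^ n) ^ 3
      = F - PowerSeries.C (R := ℚ) 3 * (F * X ^ (n * 1)) + PowerSeries.C (R := ℚ) 3 * (F * X ^ (n * 2))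
        - F * X ^ (n * 3) := by
    rw [e3]; ring
  rw [expand]
  ext N
  simp only [map_sub, map_add, PowerSeries.coeff_C_mul, PowerSeries.coeff_mul_X_pow', hF,
    PowerSeries.coeff_mk, PowerSeries.coeff_X_pow]
  by_cases hdvd : n ∣ N
  · obtain ⟨m, rfl⟩ := hdvd
    rw [shift_mul hn c3 m 1, shift_mul hn c3 m 2, shift_mul hn c3 m 3, plain hn,
      if_congr (mul_right_inj' hn.ne') rfl rfl, if_congr (mul_right_inj' hn.ne') rfl rfl]
    rcases m with _ | _ | _ | k
    · norm_num [c3]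
    · norm_num [c3]
    · norm_num [c3]
    · rw [if_pos (show 1 ≤ k + 1 + 1 + 1 by omega), if_pos (show 2 ≤ k + 1 + 1 + 1 by omega),
        if_pos (show 3 ≤ k + 1 + 1 + 1 by omega),
        if_neg (show ¬(k + 1 + 1 + 1 = 2) by omega),
        if_neg (show ¬(k + 1 + 1 + 1 = 1) by omega),
        show k + 1 + 1 + 1 - 1 = k + 1 + 1 by omega,
        show k + 1 + 1 + 1 - 2 = k + 1 by omega,
        show k + 1 + 1 + 1 - 3 = k by omega]
      simp only [c3]
      push_cast
      ring
  · rw [shift_zero n 1 c3 hdvd, shift_zero n 2 c3 hdvd, shift_zero n 3 c3 hdvd, if_neg hdvd,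
      if_neg (show ¬(N = n * 2) from fun h => hdvd (by rw [h]; exact dvd_mul_right n 2)),
      if_neg (show ¬(N = n * 1) from fun h => hdvd (by rw [h]; exact dvd_mul_right n 1))]
    ring

lemma rec4 {n : ℕ} (hn : 0 < n) :
    (PowerSeries.mk fun N => if n ∣ N then c4 (N / n) else 0) * (1 - X ^ n) ^ 4
      = X ^ (n * 2) := by
  set F : PowerSeries ℚ := PowerSeries.mk fun N => if n ∣ N then c4 (N / n) else 0 with hF
  have e4 : (PowerSeries.C (R := ℚ) 4 : PowerSeries ℚ) = 4 := map_ofNat _ 4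
  have e6 : (PowerSeries.C (R := ℚ) 6 : PowerSeries ℚ) = 6 := map_ofNat _ 6
  have expand : F * (1 - X ^ n) ^ 4
      = F - PowerSeries.C (R := ℚ) 4 * (F * X ^ (n * 1)) + PowerSeries.C (R := ℚ) 6 * (F * X ^ (n * 2))
        - PowerSeries.C (R := ℚ) 4 * (F * X ^ (n * 3)) + F * X ^ (n * 4) := by
    rw [e4, e6]; ring
  rw [expand]
  ext N
  simp only [map_sub, map_add, PowerSeries.coeff_C_mul, PowerSeries.coeff_mul_X_pow', hF,
    PowerSeries.coeff_mk, PowerSeries.coeff_X_pow]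
  by_cases hdvd : n ∣ N
  · obtain ⟨m, rfl⟩ := hdvd
    rw [shift_mul hn c4 m 1, shift_mul hn c4 m 2, shift_mul hn c4 m 3, shift_mul hn c4 m 4,
      plain hn, if_congr (mul_right_inj' hn.ne') rfl rfl]
    rcases m with _ | _ | _ | _ | k
    · norm_num [c4]
    · norm_num [c4]
    · norm_num [c4]
    · norm_num [c4]
    · rw [if_pos (show 1 ≤ k + 1 + 1 + 1 + 1 by omega),
        if_pos (show 2 ≤ k + 1 + 1 + 1 + 1 by omega),
        if_pos (show 3 ≤ k + 1 + 1 + 1 + 1 by omega),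
        if_pos (show 4 ≤ k + 1 + 1 + 1 + 1 by omega),
        if_neg (show ¬(k + 1 + 1 + 1 + 1 = 2) by omega),
        show k + 1 + 1 + 1 + 1 - 1 = k + 1 + 1 + 1 by omega,
        show k + 1 + 1 + 1 + 1 - 2 = k + 1 + 1 by omega,
        show k + 1 + 1 + 1 + 1 - 3 = k + 1 by omega,
        show k + 1 + 1 + 1 + 1 - 4 = k by omega]
      simp only [c4]
      push_cast
      ring
  · rw [shift_zero n 1 c4 hdvd, shift_zero n 2 c4 hdvd, shift_zero n 3 c4 hdvd,
      shift_zero n 4 c4 hdvd, if_neg hdvd,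
      if_neg (show ¬(N = n * 2) from fun h => hdvd (by rw [h]; exact dvd_mul_right n 2))]
    ring

end Stmt18Aux

open Stmt18Aux in
/-- Okounkov's depth-one q-zeta values, with Q₂^O(t)=t, Q₃^O(t)=t(t+1),
Q₄^O(t)=t², satisfy Z(2)=[2], Z(3)=2[3], Z(4)=[4]-(1/6)[2]. -/
theorem stmt18 :
    ZO Polynomial.X 2 = bracket 2 ∧
    ZO (Polynomial.X * (Polynomial.X + 1)) 3 = (2 : ℚ) • bracket 3 ∧
    ZO (Polynomial.X ^ 2) 4 = bracket 4 - (1 / 6 : ℚ) • bracket 2 := by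
  refine ⟨?_, ?_, ?_⟩
  · ext N
    simp only [ZO, bracket, PowerSeries.coeff_mk]
    have step : ∀ n ∈ Finset.Icc 1 N,
        PowerSeries.coeff N
            (Polynomial.eval₂ (PowerSeries.C (R := ℚ)) (X ^ n) Polynomial.X * ((1 - X ^ n) ^ 2)⁻¹)
          = if n ∣ N then c2 (N / n) else 0 := by
      intro n hn
      have hn1 : 0 < n := (Finset.mem_Icc.mp hn).1
      have he : Polynomial.eval₂ (PowerSeries.C (R := ℚ)) ((X : PowerSeries ℚ) ^ n)
          Polynomial.X = X ^ (n * 1) := by rw [Polynomial.eval₂_X, mul_one]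
      rw [he, inv_step hn1 (rec2 hn1), PowerSeries.coeff_mk]
    rw [Finset.sum_congr rfl step, ← Finset.sum_filter, filter_dvd, qPairs_eq,
      Nat.sum_divisorsAntidiagonal (fun a b => (b : ℚ) ^ (2 - 1))]
    norm_num [c2]
  · ext N
    simp only [ZO, bracket, PowerSeries.coeff_smul, PowerSeries.coeff_mk, smul_eq_mul]
    have step : ∀ n ∈ Finset.Icc 1 N,
        PowerSeries.coeff N
            (Polynomial.eval₂ (PowerSeries.C (R := ℚ)) (X ^ n)
              (Polynomial.X * (Polynomial.X + 1)) * ((1 - X ^ n) ^ 3)⁻¹)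
          = if n ∣ N then c3 (N / n) else 0 := by
      intro n hn
      have hn1 : 0 < n := (Finset.mem_Icc.mp hn).1
      have he : Polynomial.eval₂ (PowerSeries.C (R := ℚ)) ((X : PowerSeries ℚ) ^ n)
          (Polynomial.X * (Polynomial.X + 1)) = X ^ (n * 2) + X ^ (n * 1) := by
        simp only [Polynomial.eval₂_mul, Polynomial.eval₂_add, Polynomial.eval₂_X,
          Polynomial.eval₂_one]
        ring
      rw [he, inv_step hn1 (rec3 hn1), PowerSeries.coeff_mk]
    rw [Finset.sum_congr rfl step, ← Finset.sum_filter, filter_dvd, qPairs_eq,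
      Nat.sum_divisorsAntidiagonal (fun a b => (b : ℚ) ^ (3 - 1))]
    norm_num [c3, Finset.mul_sum]
    exact Finset.sum_congr rfl fun d _ => by ring
  · ext N
    simp only [ZO, bracket, map_sub, PowerSeries.coeff_smul, PowerSeries.coeff_mk, smul_eq_mul]
    have step : ∀ n ∈ Finset.Icc 1 N,
        PowerSeries.coeff N
            (Polynomial.eval₂ (PowerSeries.C (R := ℚ)) (X ^ n) (Polynomial.X ^ 2)
              * ((1 - X ^ n) ^ 4)⁻¹)
          = if n ∣ N then c4 (N / n) else 0 := by
      intro n hn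
      have hn1 : 0 < n := (Finset.mem_Icc.mp hn).1
      have he : Polynomial.eval₂ (PowerSeries.C (R := ℚ)) ((X : PowerSeries ℚ) ^ n)
          (Polynomial.X ^ 2) = X ^ (n * 2) := by
        simp only [Polynomial.eval₂_pow, Polynomial.eval₂_X]
        rw [← pow_mul]
      rw [he, inv_step hn1 (rec4 hn1), PowerSeries.coeff_mk]
    rw [Finset.sum_congr rfl step, ← Finset.sum_filter, filter_dvd, qPairs_eq,
      Nat.sum_divisorsAntidiagonal (fun a b => (b : ℚ) ^ (4 - 1)),
      Nat.sum_divisorsAntidiagonal (fun a b => (b : ℚ) ^ (2 - 1))]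
    norm_num [c4, Nat.factorial, Finset.mul_sum, ← Finset.sum_sub_distrib, -Nat.sum_div_divisors]
    exact Finset.sum_congr rfl fun d _ => by ring
end
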